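/- The map red : expn(E) → E together with Inst : (e, ε) ↦ ε(e) is an A-strategy on the A-game E: red is a total map of event structures preserving polarity, sort(Inst(e,ε)) = sort(var(red(e,ε))), red is receptive, and red is innocent. -/

import Mathlib

/-- The order and consistency data of an event structure. -/
structure PreES (E : Type) where
  le : E → E → Prop
  con : Set E → Prop

namespace PreES

variable {E F : Type}

/-- A configuration: every finite subset is consistent, and it is down-closed. -/
def Config (P : PreES E) (x : Set E) : Prop :=
  (∀ X : Set E, X ⊆ x → X.Finite → P.con X) ∧
  (∀ e e' : E, P.le e' e → e ∈ x → e' ∈ x)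

/-- `e` is enabled at the configuration `x`: `x ∪ {e}` is again a configuration. -/
def Enabled (P : PreES E) (x : Set E) (e : E) : Prop :=
  e ∉ x ∧ P.Config (insert e x)

/-- Immediate causal dependency `e → e'` : `e ≠ e'`, `e ≤ e'` and nothing strictly between. -/
def Imm (P : PreES E) (e e' : E) : Prop :=
  e ≠ e' ∧ P.le e e' ∧ ∀ d, P.le e d → P.le d e' → d = e ∨ d = e'

/-- A total map of event structures: configurations map to configurations,
injectively on each configuration. -/
def IsMap (P : PreES E) (Q : PreES F) (f : E → F) : Prop :=
  (∀ x : Set E, P.Config x → Q.Config (f '' x)) ∧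
  (∀ x : Set E, P.Config x → ∀ e₁ ∈ x, ∀ e₂ ∈ x, f e₁ = f e₂ → e₁ = e₂)

end PreES

/-- An event structure. -/
structure ES (E : Type) extends PreES E where
  le_refl : ∀ e, le e e
  le_trans : ∀ a b c, le a b → le b c → le a c
  le_antisymm : ∀ a b, le a b → le b a → a = b
  causes_finite : ∀ e, {e' | le e' e}.Finite
  con_singleton : ∀ e, con {e}
  con_subset : ∀ X Y : Set E, Y ⊆ X → con X → con Y
  con_extend : ∀ (X : Set E) (e e' : E), con X → le e e' → e' ∈ X → con (insert e X)

/-- No-overlap: events carrying the same variable are never concurrent. -/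
def NoOverlap {E V : Type} (P : PreES E) (var : E → V) : Prop :=
  ∀ e e', var e = var e' →
    ¬(P.con {e, e'} ∧ ¬ P.le e e' ∧ ¬ P.le e' e)

/-- Race-freeness: enabled events of opposite polarities can occur jointly.
`true` is the polarity `+`, `false` is `−`. -/
def RaceFree {E : Type} (P : PreES E) (pol : E → Bool) : Prop :=
  ∀ x : Set E, P.Config x → ∀ e e', P.Enabled x e → P.Enabled x e' →
    pol e = true → pol e' = false → e ≠ e' → P.Config (insert e (insert e' x))

/-- An (ordinary) strategy: a total, polarity preserving map of event structures
which is receptive and innocent. -/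
def IsStrategy {SE E : Type} (S : PreES SE) (G : PreES E)
    (polS : SE → Bool) (polG : E → Bool) (σ : SE → E) : Prop :=
  PreES.IsMap S G σ ∧
  (∀ s, polG (σ s) = polS s) ∧
  (∀ x : Set SE, S.Config x → ∀ e, polG e = false → G.Enabled (σ '' x) e →
    ∃! s, S.Enabled x s ∧ σ s = e) ∧
  (∀ s s', S.Imm s s' → (polS s' = false ∨ polS s = true) → G.Imm (σ s) (σ s'))

/-- An `𝓐`-strategy on an `𝓐`-game: a total, polarity preserving map with an
instantiation function of matching sorts, receptive (for every element of
matching sort) and innocent. -/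
def IsAStrategy {SE E A V Srt : Type} (S : PreES SE) (G : PreES E)
    (polS : SE → Bool) (polG : E → Bool) (var : E → V)
    (sortA : A → Srt) (sortV : V → Srt)
    (σ : SE → E) (inst : SE → A) : Prop :=
  PreES.IsMap S G σ ∧
  (∀ s, polG (σ s) = polS s) ∧
  (∀ s, sortA (inst s) = sortV (var (σ s))) ∧
  (∀ x : Set SE, S.Config x → ∀ e, polG e = false → G.Enabled (σ '' x) e →
    ∀ a, sortA a = sortV (var e) →
      ∃! s, S.Enabled x s ∧ σ s = e ∧ inst s = a) ∧
  (∀ s s', S.Imm s s' → (polS s' = false ∨ polS s = true) → G.Imm (σ s) (σ s'))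

/-- An event of the `𝓐`-expansion: an event `e` together with a sort-respecting
instantiation of its down-closure `[e]` (encoded as an `Option`-valued function
whose domain is exactly `[e]`). -/
structure ExEvent {E A V Srt : Type} (P : PreES E) (var : E → V)
    (sortA : A → Srt) (sortV : V → Srt) where
  ev : E
  inst : E → Option A
  dom : ∀ e', (inst e').isSome ↔ P.le e' ev
  srt : ∀ e' a, inst e' = some a → sortA a = sortV (var e')

/-- The `𝓐`-expansion of a game, as order and consistency data. -/
def expn {E A V Srt : Type} (P : PreES E) (var : E → V)
    (sortA : A → Srt) (sortV : V → Srt) : PreES (ExEvent P var sortA sortV) where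
  le p q := P.le p.ev q.ev ∧ ∀ e', P.le e' p.ev → q.inst e' = p.inst e'
  con X := P.con (ExEvent.ev '' X) ∧ ∀ p ∈ X, ∀ q ∈ X, p.ev = q.ev → p = q

/-- The projection `red : expn(E) → E`. -/
def red {E A V Srt : Type} {P : PreES E} {var : E → V}
    {sortA : A → Srt} {sortV : V → Srt} (p : ExEvent P var sortA sortV) : E := p.ev

/-- The instantiation `Inst(e,ε) = ε(e)` (needs reflexivity of the order). -/
def ExEvent.Inst {E A V Srt : Type} {P : PreES E} {var : E → V}
    {sortA : A → Srt} {sortV : V → Srt} (href : ∀ e, P.le e e)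
    (p : ExEvent P var sortA sortV) : A :=
  (p.inst p.ev).get ((p.dom p.ev).mpr (href p.ev))

/-- Parallel composition of the order/consistency data of two event structures. -/
def parPre {E F : Type} (P : PreES E) (Q : PreES F) : PreES (E ⊕ F) where
  le x y :=
    match x, y with
    | .inl a, .inl b => P.le a b
    | .inr a, .inr b => Q.le a b
    | _, _ => False
  con X := P.con {a | Sum.inl a ∈ X} ∧ Q.con {b | Sum.inr b ∈ X}

/-- Restriction of the data of an event structure to a subset of events. -/
def subPre {E : Type} (P : PreES E) (p : E → Prop) : PreES {e : E // p e} where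
  le a b := P.le a.1 b.1
  con X := P.con (Subtype.val '' X)

section Aux

open Classical

variable {E A V Srt : Type} {var : E → V} {sortA : A → Srt} {sortV : V → Srt}

lemma ExEvent.ext' {P : PreES E} {p q : ExEvent P var sortA sortV}
    (h1 : p.ev = q.ev) (h2 : ∀ e', p.inst e' = q.inst e') : p = q := by
  obtain ⟨pe, pi, pd, ps⟩ := p
  obtain ⟨qe, qi, qd, qs⟩ := q
  dsimp at h1 h2
  subst h1
  have : pi = qi := funext h2
  subst this
  rfl

lemma ExEvent.ext_dom {P : PreES E} {p q : ExEvent P var sortA sortV}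
    (h1 : p.ev = q.ev) (h2 : ∀ e', P.le e' p.ev → p.inst e' = q.inst e') : p = q := by
  apply ExEvent.ext' h1
  intro e'
  by_cases h : P.le e' p.ev
  · exact h2 e' h
  · have hp : p.inst e' = none :=
      Option.not_isSome_iff_eq_none.mp (fun hs => h ((p.dom e').mp hs))
    have hq : q.inst e' = none :=
      Option.not_isSome_iff_eq_none.mp (fun hs => h (h1 ▸ (q.dom e').mp hs))
    rw [hp, hq]

lemma expn_le_iff {P : PreES E} (p q : ExEvent P var sortA sortV) :
    (expn P var sortA sortV).le p q ↔
      (P.le p.ev q.ev ∧ ∀ e', P.le e' p.ev → q.inst e' = p.inst e') := Iff.rfl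

lemma expn_con_iff {P : PreES E} (X : Set (ExEvent P var sortA sortV)) :
    (expn P var sortA sortV).con X ↔
      (P.con (ExEvent.ev '' X) ∧ ∀ p ∈ X, ∀ q ∈ X, p.ev = q.ev → p = q) := Iff.rfl

open Classical in
/-- Restriction of an expansion event to a cause. -/
noncomputable def ExEvent.restrict (S : ES E) (q : ExEvent S.toPreES var sortA sortV)
    (e : E) (h : S.le e q.ev) : ExEvent S.toPreES var sortA sortV where
  ev := e
  inst e' := if S.le e' e then q.inst e' else none
  dom e' := by
    constructor
    · intro hs
      by_contra hle
      rw [if_neg hle] at hs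
      simp at hs
    · intro hle
      rw [if_pos hle]
      exact (q.dom e').mpr (S.le_trans _ _ _ hle h)
  srt e' a ha := by
    by_cases hle : S.le e' e
    · rw [if_pos hle] at ha; exact q.srt e' a ha
    · rw [if_neg hle] at ha; cases ha

lemma ExEvent.restrict_le (S : ES E) (q : ExEvent S.toPreES var sortA sortV)
    (e : E) (h : S.le e q.ev) :
    (expn S.toPreES var sortA sortV).le (q.restrict S e h) q := by
  refine ⟨h, fun e' he' => ?_⟩
  show q.inst e' = if S.le e' e then q.inst e' else none
  rw [if_pos (show S.le e' e from he')]

lemma ExEvent.restrict_inst (S : ES E) (q : ExEvent S.toPreES var sortA sortV)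
    (e : E) (h : S.le e q.ev) {e' : E} (hle : S.le e' e) :
    (q.restrict S e h).inst e' = q.inst e' := by
  show (if S.le e' e then q.inst e' else none) = q.inst e'
  rw [if_pos hle]

/-- Two events of a configuration of the expansion agree on any common cause. -/
lemma config_agree (S : ES E) {x : Set (ExEvent S.toPreES var sortA sortV)}
    (hx : (expn S.toPreES var sortA sortV).Config x)
    {q1 q2 : ExEvent S.toPreES var sortA sortV} (h1 : q1 ∈ x) (h2 : q2 ∈ x) {e : E}
    (hle1 : S.le e q1.ev) (hle2 : S.le e q2.ev) :
    q1.inst e = q2.inst e := by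
  have hr1 : q1.restrict S e hle1 ∈ x := hx.2 _ _ (q1.restrict_le S e hle1) h1
  have hr2 : q2.restrict S e hle2 ∈ x := hx.2 _ _ (q2.restrict_le S e hle2) h2
  have hcon := hx.1 {q1.restrict S e hle1, q2.restrict S e hle2}
    (by intro z hz; rcases hz with rfl | rfl; exacts [hr1, hr2])
    (Set.Finite.insert _ (Set.finite_singleton _))
  have heq : q1.restrict S e hle1 = q2.restrict S e hle2 :=
    hcon.2 _ (Set.mem_insert _ _) _ (Set.mem_insert_of_mem _ rfl) rfl
  have h := congrArg (fun r => ExEvent.inst r e) heq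
  rwa [ExEvent.restrict_inst S q1 e hle1 (S.le_refl e),
    ExEvent.restrict_inst S q2 e hle2 (S.le_refl e)] at h

open Classical in
/-- The event witnessing receptivity. -/
noncomputable def recepEvent (S : ES E) (x : Set (ExEvent S.toPreES var sortA sortV))
    (e : E) (a : A) (hsa : sortA a = sortV (var e))
    (hex : ∀ e', S.le e' e → e' ≠ e → ∃ q, q ∈ x ∧ q.ev = e') :
    ExEvent S.toPreES var sortA sortV where
  ev := e
  inst e' := if h : S.le e' e then
      (if hne : e' = e then some a else ((hex e' h hne).choose).inst e') else none
  dom e' := by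
    constructor
    · intro hs
      by_contra h
      rw [dif_neg h] at hs
      simp at hs
    · intro h
      rw [dif_pos h]
      by_cases hne : e' = e
      · rw [dif_pos hne]; simp
      · rw [dif_neg hne]
        exact ((hex e' h hne).choose.dom e').mpr
          (by rw [(hex e' h hne).choose_spec.2]; exact S.le_refl e')
  srt e' a' ha' := by
    by_cases h : S.le e' e
    · rw [dif_pos h] at ha'
      by_cases hne : e' = e
      · rw [dif_pos hne] at ha'
        cases ha'
        rw [hne]
        exact hsa
      · rw [dif_neg hne] at ha'
        exact (hex e' h hne).choose.srt e' a' ha'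
    · rw [dif_neg h] at ha'
      cases ha'

lemma recepEvent_inst_self (S : ES E) (x : Set (ExEvent S.toPreES var sortA sortV))
    (e : E) (a : A) (hsa : sortA a = sortV (var e))
    (hex : ∀ e', S.le e' e → e' ≠ e → ∃ q, q ∈ x ∧ q.ev = e') :
    (recepEvent S x e a hsa hex).inst e = some a := by
  show (if h : S.le e e then
      (if hne : e = e then some a else ((hex e h hne).choose).inst e) else none) = some a
  rw [dif_pos (S.le_refl e), dif_pos rfl]

lemma recepEvent_inst (S : ES E) {x : Set (ExEvent S.toPreES var sortA sortV)}
    (hx : (expn S.toPreES var sortA sortV).Config x)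
    (e : E) (a : A) (hsa : sortA a = sortV (var e))
    (hex : ∀ e', S.le e' e → e' ≠ e → ∃ q, q ∈ x ∧ q.ev = e')
    {q : ExEvent S.toPreES var sortA sortV} (hq : q ∈ x) {e' : E}
    (hle : S.le e' e) (hne : e' ≠ e) (hleq : S.le e' q.ev) :
    (recepEvent S x e a hsa hex).inst e' = q.inst e' := by
  show (if h : S.le e' e then
      (if hn : e' = e then some a else ((hex e' h hn).choose).inst e') else none) = q.inst e'
  rw [dif_pos hle, dif_neg hne]
  exact config_agree S hx (hex e' hle hne).choose_spec.1 hq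
    (by rw [(hex e' hle hne).choose_spec.2]; exact S.le_refl e') hleq

lemma ExEvent.inst_self_eq {P : PreES E} (href : ∀ e, P.le e e)
    (p : ExEvent P var sortA sortV) : p.inst p.ev = some (p.Inst href) :=
  (Option.some_get _).symm

lemma ExEvent.Inst_eq {P : PreES E} (href : ∀ e, P.le e e)
    {p : ExEvent P var sortA sortV} {a : A} (h : p.inst p.ev = some a) :
    p.Inst href = a := by
  have h2 := ExEvent.inst_self_eq href p
  rw [h] at h2
  exact (Option.some_inj.mp h2).symm

end Aux

/-- `red : expn(E) → E` together with `Inst : (e,ε) ↦ ε(e)` is an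
`𝓐`-strategy on the `𝓐`-game `E`. -/
theorem red_Inst_isAStrategy {E A V Srt : Type} (S : ES E) (pol : E → Bool)
    (var : E → V) (sortA : A → Srt) (sortV : V → Srt)
    (hrf : RaceFree S.toPreES pol) (hno : NoOverlap S.toPreES var) :
    IsAStrategy (expn S.toPreES var sortA sortV) S.toPreES
      (fun p => pol p.ev) pol var sortA sortV
      (fun p => red p) (fun p => p.Inst S.le_refl) := by
  classical
  have himg : ∀ (x : Set (ExEvent S.toPreES var sortA sortV)),
      (fun p => red p) '' x = ExEvent.ev '' x := fun x => rfl
  -- injectivity of `ev` on configurations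
  have hinj : ∀ (x : Set (ExEvent S.toPreES var sortA sortV)),
      (expn S.toPreES var sortA sortV).Config x →
      ∀ q1 ∈ x, ∀ q2 ∈ x, q1.ev = q2.ev → q1 = q2 := by
    intro x hx q1 h1 q2 h2 hev
    have hcon := hx.1 {q1, q2}
      (by intro z hz; rcases hz with rfl | rfl; exacts [h1, h2])
      (Set.Finite.insert _ (Set.finite_singleton _))
    exact hcon.2 _ (Set.mem_insert _ _) _ (Set.mem_insert_of_mem _ rfl) hev
  refine ⟨⟨?_, ?_⟩, fun s => rfl, ?_, ?_, ?_⟩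
  · -- configurations map to configurations
    intro x hx
    rw [himg]
    constructor
    · intro X hX hXfin
      set Y : Set (ExEvent S.toPreES var sortA sortV) := {q | q ∈ x ∧ q.ev ∈ X} with hY
      have hYx : Y ⊆ x := fun q hq => hq.1
      have hYfin : Y.Finite := by
        apply Set.Finite.of_finite_image (f := ExEvent.ev)
        · exact hXfin.subset (by rintro _ ⟨q, hq, rfl⟩; exact hq.2)
        · intro q1 h1 q2 h2 hev
          exact hinj x hx q1 (hYx h1) q2 (hYx h2) hev
      have hconY := (hx.1 Y hYx hYfin).1
      apply S.con_subset _ _ _ hconY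
      intro e heX
      obtain ⟨q, hqx, rfl⟩ := hX heX
      exact ⟨q, ⟨hqx, heX⟩, rfl⟩
    · rintro _ e' hle ⟨q, hq, rfl⟩
      have : q.restrict S e' hle ∈ x := hx.2 _ _ (q.restrict_le S e' hle) hq
      exact ⟨_, this, rfl⟩
  · -- local injectivity
    intro x hx q1 h1 q2 h2 heq
    exact hinj x hx q1 h1 q2 h2 heq
  · -- sorts match
    intro p
    have h : p.inst p.ev = some (p.Inst S.le_refl) := (Option.some_get _).symm
    exact p.srt _ _ h
  · -- receptivity
    intro x hx e _hpol he a hsa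
    rw [himg] at he
    have hex : ∀ e', S.le e' e → e' ≠ e → ∃ q, q ∈ x ∧ q.ev = e' := by
      intro e' hle hne
      have hmem : e' ∈ insert e (ExEvent.ev '' x) :=
        he.2.2 e e' hle (Set.mem_insert _ _)
      rcases Set.mem_insert_iff.mp hmem with rfl | hmem
      · exact absurd rfl hne
      · obtain ⟨q, hq, hq'⟩ := hmem; exact ⟨q, hq, hq'⟩
    set p := recepEvent S x e a hsa hex with hp
    have hpev : p.ev = e := rfl
    have hpnotx : p ∉ x := by
      intro hmem
      exact he.1 ⟨p, hmem, rfl⟩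
    have hInst : p.Inst S.le_refl = a :=
      ExEvent.Inst_eq S.le_refl (recepEvent_inst_self S x e a hsa hex)
    refine ⟨p, ⟨⟨hpnotx, ?_, ?_⟩, rfl, hInst⟩, ?_⟩
    · -- finite consistency of insert p x
      intro X hX hXfin
      refine ⟨?_, ?_⟩
      · apply he.2.1 (ExEvent.ev '' X) ?_ (hXfin.image _)
        rintro _ ⟨q, hq, rfl⟩
        rcases hX hq with rfl | hqx
        · exact Set.mem_insert _ _
        · exact Set.mem_insert_of_mem _ ⟨q, hqx, rfl⟩
      · intro q1 h1 q2 h2 hev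
        rcases hX h1 with rfl | h1x <;> rcases hX h2 with rfl | h2x
        · rfl
        · exact absurd ⟨q2, h2x, hev.symm⟩ he.1
        · exact absurd ⟨q1, h1x, hev⟩ he.1
        · exact hinj x hx q1 h1x q2 h2x hev
    · -- down-closure of insert p x
      intro r r' hle hr
      rcases Set.mem_insert_iff.mp hr with rfl | hrx
      · obtain ⟨h1, h2⟩ := hle
        by_cases hee : r'.ev = e
        · left
          refine ExEvent.ext_dom hee ?_
          intro e' he'
          exact (h2 e' he').symm
        · right
          obtain ⟨q, hqx, hqev⟩ := hex r'.ev h1 hee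
          have : r' = q := by
            refine ExEvent.ext_dom hqev.symm ?_
            intro e' he'
            have hne' : e' ≠ e := by
              rintro rfl
              exact hee (S.le_antisymm _ _ h1 he')
            rw [← h2 e' he']
            exact recepEvent_inst S hx e a hsa hex hqx
              (S.le_trans _ _ _ he' h1) hne' (hqev ▸ he')
          rw [this]; exact hqx
      · exact Set.mem_insert_of_mem _ (hx.2 _ _ hle hrx)
    · -- uniqueness
      rintro p' ⟨hen', hev', hinst'⟩
      have hev'' : p'.ev = e := hev'
      refine ExEvent.ext_dom (hev''.trans hpev.symm) ?_
      intro e' he'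
      have he'e : S.le e' e := hev'' ▸ he'
      by_cases hne : e' = e
      · subst hne
        have hinst2 : p'.Inst S.le_refl = a := hinst'
        have h1 : p'.inst p'.ev = some a := by
          rw [ExEvent.inst_self_eq S.le_refl p', hinst2]
        rw [hev''] at h1
        rw [h1, hp]
        exact (recepEvent_inst_self S x e' a hsa hex).symm
      · obtain ⟨q, hqx, hqev⟩ := hex e' he'e hne
        have hq1 : p'.inst e' = q.inst e' :=
          config_agree S hen'.2 (Set.mem_insert _ _) (Set.mem_insert_of_mem _ hqx)
            he' (hqev ▸ S.le_refl e')
        have hq2 : p.inst e' = q.inst e' :=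
          recepEvent_inst S hx e a hsa hex hqx he'e hne (hqev ▸ S.le_refl e')
        rw [hq1, hq2]
  · -- innocence
    rintro s s' ⟨hne, hle, hmin⟩ _
    obtain ⟨h1, h2⟩ := hle
    refine ⟨?_, h1, ?_⟩
    · intro hev
      apply hne
      refine ExEvent.ext_dom hev ?_
      intro e' he'
      exact (h2 e' he').symm
    · intro d hd1 hd2
      have hd2' : S.le d s'.ev := hd2
      set m := s'.restrict S d hd2' with hm
      have hms' : (expn S.toPreES var sortA sortV).le m s' := s'.restrict_le S d hd2'
      have hsm : (expn S.toPreES var sortA sortV).le s m := by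
        refine ⟨hd1, fun e' he' => ?_⟩
        rw [hm, ExEvent.restrict_inst S s' d hd2' (S.le_trans _ _ _ he' hd1)]
        exact h2 e' he'
      rcases hmin m hsm hms' with h | h
      · left; exact congrArg ExEvent.ev h
      · right; exact congrArg ExEvent.ev h
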